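/- arXiv:1102.1061 — 3 statements merged into one kernel-verified Lean document; each statement's English description precedes it below -/
import Mathlib

section
/- Completeness (reify) for the universal IK-CPS model: for any formula A and context Γ, if Γ forces A in the universal model, then there exists a proof term p in normal form such that Γ ⊢ p : A in MQC. -/
/-- First-order formulas of minimal predicate logic (MQC), with atomic
formulas drawn from `Atm` and quantification encoded via functions from
individual terms `Trm` (weak HOAS). -/
inductive Fml (Atm Trm : Type) : Type where
  | atom : Atm → Fml Atm Trm
  | and : Fml Atm Trm → Fml Atm Trm → Fml Atm Trm
  | or : Fml Atm Trm → Fml Atm Trm → Fml Atm Trm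
  | imp : Fml Atm Trm → Fml Atm Trm → Fml Atm Trm
  | all : (Trm → Fml Atm Trm) → Fml Atm Trm
  | ex : (Trm → Fml Atm Trm) → Fml Atm Trm

/-- An Intuitionistic Kripke-CPS model. -/
structure IKCPS (Atm Trm : Type) where
  W : Type
  le : W → W → Prop
  le_refl : ∀ w, le w w
  le_trans : ∀ {a b c}, le a b → le b c → le a c
  /-- binary exploding relation between worlds and formulas -/
  explode : W → Fml Atm Trm → Prop
  /-- strong forcing of atomic formulas -/
  satom : W → Atm → Prop
  satom_mono : ∀ {w w' X}, le w w' → satom w X → satom w' X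
  Dom : W → Set Trm
  Dom_mono : ∀ {w w'}, le w w' → Dom w ⊆ Dom w'

namespace IKCPS

variable {Atm Trm : Type}

/-- The continuation ("forcing") monad over a predicate `S` of strong forcing:
`w ⊩ A` iff for all formulas `C`, for all `w' ≥ w`,
`(∀ w'' ≥ w', w'' ⊩ₛ A → w'' ⊩_E C) → w' ⊩_E C`. -/
def fa (M : IKCPS Atm Trm) (S : M.W → Prop) (w : M.W) : Prop :=
  ∀ C : Fml Atm Trm, ∀ w', M.le w w' →
    (∀ w'', M.le w' w'' → S w'' → M.explode w'' C) → M.explode w' C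

/-- Strong forcing, extended from atomic to composite formulas. -/
def sforces (M : IKCPS Atm Trm) : Fml Atm Trm → M.W → Prop
  | .atom X => fun w => M.satom w X
  | .and A B => fun w => M.fa (M.sforces A) w ∧ M.fa (M.sforces B) w
  | .or A B => fun w => M.fa (M.sforces A) w ∨ M.fa (M.sforces B) w
  | .imp A B => fun w => ∀ w', M.le w w' → M.fa (M.sforces A) w' → M.fa (M.sforces B) w'
  | .all A => fun w => ∀ w', M.le w w' → ∀ t ∈ M.Dom w', M.fa (M.sforces (A t)) w'
  | .ex A => fun w => ∃ t ∈ M.Dom w, M.fa (M.sforces (A t)) w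

/-- (Non-strong) forcing. -/
def forces (M : IKCPS Atm Trm) (A : Fml Atm Trm) (w : M.W) : Prop :=
  M.fa (M.sforces A) w

end IKCPS

/-- Natural deduction for minimal intuitionistic predicate logic (MQC).
`Deriv Γ A` states that there is a proof term `p` with `Γ ⊢ p : A`. -/
inductive Deriv {Atm Trm : Type} : List (Fml Atm Trm) → Fml Atm Trm → Prop where
  | ax {Γ A} : A ∈ Γ → Deriv Γ A
  | andI {Γ A B} : Deriv Γ A → Deriv Γ B → Deriv Γ (.and A B)
  | andE1 {Γ A B} : Deriv Γ (.and A B) → Deriv Γ A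
  | andE2 {Γ A B} : Deriv Γ (.and A B) → Deriv Γ B
  | orI1 {Γ A B} : Deriv Γ A → Deriv Γ (.or A B)
  | orI2 {Γ A B} : Deriv Γ B → Deriv Γ (.or A B)
  | orE {Γ A B C} : Deriv Γ (.or A B) → Deriv (A :: Γ) C → Deriv (B :: Γ) C → Deriv Γ C
  | impI {Γ A B} : Deriv (A :: Γ) B → Deriv Γ (.imp A B)
  | impE {Γ A B} : Deriv Γ (.imp A B) → Deriv Γ A → Deriv Γ B
  | allI {Γ A} : (∀ t, Deriv Γ (A t)) → Deriv Γ (.all A)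
  | allE {Γ A} (t : Trm) : Deriv Γ (.all A) → Deriv Γ (A t)
  | exI {Γ A} (t : Trm) : Deriv Γ (A t) → Deriv Γ (.ex A)
  | exE {Γ A C} : Deriv Γ (.ex A) → (∀ t, Deriv (A t :: Γ) C) → Deriv Γ C

/-- Normal (`b = true`) and neutral (`b = false`) natural deduction derivations,
defined simultaneously.  `NND true Γ A` means there is a proof term in normal
form `r` with `Γ ⊢ r : A`; `NND false Γ A` means there is a neutral proof term
`e` with `Γ ⊢ e : A`. -/
inductive NND {Atm Trm : Type} : Bool → List (Fml Atm Trm) → Fml Atm Trm → Prop where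
  | ne {Γ A} : NND false Γ A → NND true Γ A
  | ax {Γ A} : A ∈ Γ → NND false Γ A
  | andI {Γ A B} : NND true Γ A → NND true Γ B → NND true Γ (.and A B)
  | andE1 {Γ A B} : NND false Γ (.and A B) → NND false Γ A
  | andE2 {Γ A B} : NND false Γ (.and A B) → NND false Γ B
  | orI1 {Γ A B} : NND true Γ A → NND true Γ (.or A B)
  | orI2 {Γ A B} : NND true Γ B → NND true Γ (.or A B)
  | orE {Γ A B C} : NND false Γ (.or A B) → NND true (A :: Γ) C → NND true (B :: Γ) C →
      NND false Γ C
  | impI {Γ A B} : NND true (A :: Γ) B → NND true Γ (.imp A B)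
  | impE {Γ A B} : NND false Γ (.imp A B) → NND true Γ A → NND false Γ B
  | allI {Γ A} : (∀ t, NND true Γ (A t)) → NND true Γ (.all A)
  | allE {Γ A} (t : Trm) : NND false Γ (.all A) → NND false Γ (A t)
  | exI {Γ A} (t : Trm) : NND true Γ (A t) → NND true Γ (.ex A)
  | exE {Γ A C} : NND false Γ (.ex A) → (∀ t, NND true (A t :: Γ) C) → NND false Γ C

/-- There is a normal-form derivation `Γ ⊢ r : A`. -/
def NfD {Atm Trm : Type} (Γ : List (Fml Atm Trm)) (A : Fml Atm Trm) : Prop :=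
  NND true Γ A

/-- There is a neutral derivation `Γ ⊢ e : A`. -/
def NeD {Atm Trm : Type} (Γ : List (Fml Atm Trm)) (A : Fml Atm Trm) : Prop :=
  NND false Γ A

theorem NND.weaken {Atm Trm : Type} {b : Bool} {Γ Γ' : List (Fml Atm Trm)}
    {A : Fml Atm Trm} (d : NND b Γ A) (h : Γ ⊆ Γ') : NND b Γ' A := by
  induction d generalizing Γ' with
  | ne _ ih => exact .ne (ih h)
  | ax hm => exact .ax (h hm)
  | andI _ _ ih1 ih2 => exact .andI (ih1 h) (ih2 h)
  | andE1 _ ih => exact .andE1 (ih h)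
  | andE2 _ ih => exact .andE2 (ih h)
  | orI1 _ ih => exact .orI1 (ih h)
  | orI2 _ ih => exact .orI2 (ih h)
  | orE _ _ _ ih ih1 ih2 =>
      exact .orE (ih h) (ih1 (List.cons_subset_cons _ h)) (ih2 (List.cons_subset_cons _ h))
  | impI _ ih => exact .impI (ih (List.cons_subset_cons _ h))
  | impE _ _ ih1 ih2 => exact .impE (ih1 h) (ih2 h)
  | allI _ ih => exact .allI fun t => ih t h
  | allE t _ ih => exact .allE t (ih h)
  | exI t _ ih => exact .exI t (ih h)
  | exE _ _ ih ih2 => exact .exE (ih h) fun t => ih2 t (List.cons_subset_cons _ h)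

/-- The universal IK-CPS model: worlds are contexts of MQC ordered by
inclusion, strong forcing of an atom and the exploding relation are given by
normal-form derivability, and the domain of quantification is constant. -/
def univModel (Atm Trm : Type) : IKCPS Atm Trm where
  W := List (Fml Atm Trm)
  le Γ Γ' := Γ ⊆ Γ'
  le_refl _ := List.Subset.refl _
  le_trans h1 h2 := List.Subset.trans h1 h2
  explode Γ C := NfD Γ C
  satom Γ X := NfD Γ (.atom X)
  satom_mono h d := d.weaken h
  Dom _ := Set.univ
  Dom_mono _ := le_rfl

theorem reify_reflect {Atm Trm : Type} (A : Fml Atm Trm) :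
    (∀ Γ : List (Fml Atm Trm), (univModel Atm Trm).sforces A Γ → NfD Γ A) ∧
    (∀ Γ : List (Fml Atm Trm), NeD Γ A → (univModel Atm Trm).forces A Γ) := by
  induction A with
  | atom X =>
    refine ⟨fun Γ h => h, fun Γ e C Γ' sub k => k Γ' (List.Subset.refl _) (.ne (e.weaken sub))⟩
  | and A B ihA ihB =>
    refine ⟨fun Γ h => ?_, fun Γ e C Γ' sub k => ?_⟩
    · rcases h with ⟨hA, hB⟩
      exact .andI (hA A Γ (List.Subset.refl _) (fun Γ'' le hs => ihA.1 Γ'' hs))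
        (hB B Γ (List.Subset.refl _) (fun Γ'' le hs => ihB.1 Γ'' hs))
    · exact k Γ' (List.Subset.refl _)
        ⟨ihA.2 Γ' (.andE1 (e.weaken sub)), ihB.2 Γ' (.andE2 (e.weaken sub))⟩
  | or A B ihA ihB =>
    refine ⟨fun Γ h => ?_, fun Γ e C Γ' sub k => ?_⟩
    · rcases h with hA | hB
      · exact .orI1 (hA A Γ (List.Subset.refl _) (fun Γ'' le hs => ihA.1 Γ'' hs))
      · exact .orI2 (hB B Γ (List.Subset.refl _) (fun Γ'' le hs => ihB.1 Γ'' hs))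
    · refine .ne (.orE (e.weaken sub) ?_ ?_)
      · exact k (A :: Γ') (List.subset_cons_self _ _)
          (Or.inl (ihA.2 _ (.ax (List.mem_cons_self))))
      · exact k (B :: Γ') (List.subset_cons_self _ _)
          (Or.inr (ihB.2 _ (.ax (List.mem_cons_self))))
  | imp A B ihA ihB =>
    refine ⟨fun Γ h => ?_, fun Γ e C Γ' sub k => ?_⟩
    · refine .impI ?_
      exact h (A :: Γ) (List.subset_cons_self _ _) (ihA.2 _ (.ax (List.mem_cons_self)))
        B (A :: Γ) (List.Subset.refl _) (fun Γ'' le hs => ihB.1 Γ'' hs)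
    · refine k Γ' (List.Subset.refl _) ?_
      intro Γ'' le2 fA C2 Γ3 le3 k2
      refine fA C2 Γ3 le3 (fun Γ4 le4 hsA => ?_)
      have eB : NeD Γ4 B :=
        .impE (e.weaken (fun x hx => le4 (le3 (le2 (sub hx))))) (ihA.1 Γ4 hsA)
      exact ihB.2 Γ4 eB C2 Γ4 (List.Subset.refl _)
        (fun Γ5 le5 hsB => k2 Γ5 (fun x hx => le5 (le4 hx)) hsB)
  | all A ih =>
    refine ⟨fun Γ h => ?_, fun Γ e C Γ' sub k => ?_⟩
    · exact .allI fun t =>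
        h Γ (List.Subset.refl _) t trivial (A t) Γ (List.Subset.refl _)
          (fun Γ'' le hs => (ih t).1 Γ'' hs)
    · exact k Γ' (List.Subset.refl _)
        (fun Γ'' le2 t _ => (ih t).2 Γ'' (.allE t (e.weaken (List.Subset.trans sub le2))))
  | ex A ih =>
    refine ⟨fun Γ h => ?_, fun Γ e C Γ' sub k => ?_⟩
    · rcases h with ⟨t, _, ht⟩
      exact .exI t (ht (A t) Γ (List.Subset.refl _) (fun Γ'' le hs => (ih t).1 Γ'' hs))
    · refine .ne (.exE (e.weaken sub) (fun t => ?_))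
      exact k (A t :: Γ') (List.subset_cons_self _ _)
        ⟨t, trivial, (ih t).2 _ (.ax (List.mem_cons_self))⟩

/-- Completeness (reify) for the universal IK-CPS model. -/
theorem reify {Atm Trm : Type} (A : Fml Atm Trm) (Γ : List (Fml Atm Trm))
    (h : (univModel Atm Trm).forces A Γ) : NfD Γ A :=
  h A Γ (List.Subset.refl _) (fun Γ'' _ hs => (reify_reflect A).1 Γ'' hs)
end

section
/- Normalisation by evaluation via call-by-value IK-CPS models works for closed terms: every closed derivable sequent ⊢ p : A of MQC has a normal-form derivation ⊢ p' : A. -/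
namespace IKCPS

variable {Atm Trm : Type}

/-- Call-by-value strong forcing. -/
def sforcesV (M : IKCPS Atm Trm) : Fml Atm Trm → M.W → Prop
  | .atom X => fun w => M.satom w X
  | .and A B => fun w => M.sforcesV A w ∧ M.sforcesV B w
  | .or A B => fun w => M.sforcesV A w ∨ M.sforcesV B w
  | .imp A B => fun w => ∀ w', M.le w w' → M.sforcesV A w' → M.fa (M.sforcesV B) w'
  | .all A => fun w => ∀ w', M.le w w' → ∀ t ∈ M.Dom w', M.fa (M.sforcesV (A t)) w'
  | .ex A => fun w => ∃ t ∈ M.Dom w, M.sforcesV (A t) w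

/-- Call-by-value (non-strong) forcing. -/
def forcesV (M : IKCPS Atm Trm) (A : Fml Atm Trm) (w : M.W) : Prop :=
  M.fa (M.sforcesV A) w

end IKCPS

namespace NbEAux

variable {Atm Trm : Type}

theorem fa_mono (M : IKCPS Atm Trm) {S : M.W → Prop} {w w' : M.W} (h : M.le w w') :
    M.fa S w → M.fa S w' := fun hf C w'' h2 k => hf C w'' (M.le_trans h h2) k

theorem fa_ret (M : IKCPS Atm Trm) {S : M.W → Prop}
    (hmono : ∀ {w w'}, M.le w w' → S w → S w') {w : M.W} (s : S w) : M.fa S w :=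
  fun _ w' h k => k w' (M.le_refl _) (hmono h s)

theorem fa_bind (M : IKCPS Atm Trm) {S T : M.W → Prop} {w : M.W}
    (hs : M.fa S w) (f : ∀ w', M.le w w' → S w' → M.fa T w') : M.fa T w :=
  fun C w' h k => hs C w' h fun w'' h2 s =>
    f w'' (M.le_trans h h2) s C w'' (M.le_refl _) fun w3 h3 t =>
      k w3 (M.le_trans h2 h3) t

theorem sforcesV_mono (M : IKCPS Atm Trm) (A : Fml Atm Trm) :
    ∀ {w w' : M.W}, M.le w w' → M.sforcesV A w → M.sforcesV A w' := by
  induction A with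
  | atom X => exact fun h s => M.satom_mono h s
  | and A B ihA ihB => exact fun h s => ⟨ihA h s.1, ihB h s.2⟩
  | or A B ihA ihB =>
      exact fun h s => s.elim (fun s => .inl (ihA h s)) (fun s => .inr (ihB h s))
  | imp A B ihA ihB => exact fun h s w2 h2 a => s w2 (M.le_trans h h2) a
  | all A ih => exact fun h s w2 h2 t ht => s w2 (M.le_trans h h2) t ht
  | ex A ih => exact fun h s => ⟨s.choose, M.Dom_mono h s.choose_spec.1,
      ih s.choose h s.choose_spec.2⟩

/-- Soundness of the call-by-value interpretation in the universal model. -/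
theorem soundV {Γ : List (Fml Atm Trm)} {A : Fml Atm Trm} (d : Deriv Γ A) :
    ∀ Δ : List (Fml Atm Trm),
      (∀ B ∈ Γ, (univModel Atm Trm).sforcesV B Δ) →
      (univModel Atm Trm).forcesV A Δ := by
  set M := univModel Atm Trm with hM
  induction d with
  | @ax Γ A h =>
      exact fun Δ hctx => fa_ret M (sforcesV_mono M A) (hctx A h)
  | @andI Γ A B _ _ ih1 ih2 =>
      refine fun Δ hctx => fa_bind M (ih1 Δ hctx) fun Δ' h1 s1 => ?_
      refine fa_bind M (ih2 Δ' fun B hB => sforcesV_mono M B h1 (hctx B hB))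
        fun Δ'' h2 s2 => ?_
      exact fa_ret M (sforcesV_mono M _) ⟨sforcesV_mono M A h2 s1, s2⟩
  | @andE1 Γ A B _ ih =>
      exact fun Δ hctx => fa_bind M (ih Δ hctx) fun Δ' _ s =>
        fa_ret M (sforcesV_mono M A) s.1
  | @andE2 Γ A B _ ih =>
      exact fun Δ hctx => fa_bind M (ih Δ hctx) fun Δ' _ s =>
        fa_ret M (sforcesV_mono M B) s.2
  | @orI1 Γ A B _ ih =>
      exact fun Δ hctx => fa_bind M (ih Δ hctx) fun Δ' _ s =>
        fa_ret M (sforcesV_mono M (.or A B)) (.inl s)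
  | @orI2 Γ A B _ ih =>
      exact fun Δ hctx => fa_bind M (ih Δ hctx) fun Δ' _ s =>
        fa_ret M (sforcesV_mono M (.or A B)) (.inr s)
  | @orE Γ A B C _ _ _ ih ih1 ih2 =>
      refine fun Δ hctx => fa_bind M (ih Δ hctx) fun Δ' h1 s => ?_
      have hctx' : ∀ E ∈ Γ, M.sforcesV E Δ' :=
        fun E hE => sforcesV_mono M E h1 (hctx E hE)
      rcases s with s | s
      · exact ih1 Δ' (by
          intro E hE
          rcases List.mem_cons.mp hE with rfl | hE
          · exact s
          · exact hctx' E hE)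
      · exact ih2 Δ' (by
          intro E hE
          rcases List.mem_cons.mp hE with rfl | hE
          · exact s
          · exact hctx' E hE)
  | @impI Γ A B _ ih =>
      refine fun Δ hctx => fa_ret M (sforcesV_mono M (.imp A B)) ?_
      intro Δ' h1 sA
      refine ih Δ' ?_
      intro E hE
      rcases List.mem_cons.mp hE with rfl | hE
      · exact sA
      · exact sforcesV_mono M E h1 (hctx E hE)
  | @impE Γ A B _ _ ih1 ih2 =>
      refine fun Δ hctx => fa_bind M (ih1 Δ hctx) fun Δ' h1 f => ?_
      refine fa_bind M (ih2 Δ' fun E hE => sforcesV_mono M E h1 (hctx E hE))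
        fun Δ'' h2 a => ?_
      exact f Δ'' h2 a
  | @allI Γ A _ ih =>
      refine fun Δ hctx => fa_ret M (sforcesV_mono M (.all A)) ?_
      intro Δ' h1 t _
      exact ih t Δ' fun E hE => sforcesV_mono M E h1 (hctx E hE)
  | @allE Γ A t _ ih =>
      exact fun Δ hctx => fa_bind M (ih Δ hctx) fun Δ' _ s =>
        s Δ' (M.le_refl _) t (Set.mem_univ t)
  | @exI Γ A t _ ih =>
      exact fun Δ hctx => fa_bind M (ih Δ hctx) fun Δ' _ s =>
        fa_ret M (sforcesV_mono M (.ex A)) ⟨t, Set.mem_univ t, s⟩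
  | @exE Γ A C _ _ ih ih2 =>
      refine fun Δ hctx => fa_bind M (ih Δ hctx) fun Δ' h1 s => ?_
      obtain ⟨t, -, s⟩ := s
      refine ih2 t Δ' ?_
      intro E hE
      rcases List.mem_cons.mp hE with rfl | hE
      · exact s
      · exact sforcesV_mono M E h1 (hctx E hE)

/-- Completeness in the universal model: reify (from strong forcing) and
reflect (from neutral derivations). -/
theorem completeV (A : Fml Atm Trm) :
    ∀ Γ : List (Fml Atm Trm),
      ((univModel Atm Trm).sforcesV A Γ → NfD Γ A) ∧
      (NeD Γ A → (univModel Atm Trm).forcesV A Γ) := by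
  set M := univModel Atm Trm with hM
  have cons_le : ∀ (A : Fml Atm Trm) (Γ : List (Fml Atm Trm)),
      M.le Γ (A :: Γ) := fun A Γ => List.subset_cons_self A Γ
  induction A with
  | atom X =>
      refine fun Γ => ⟨fun s => s, fun e C Γ' h k => ?_⟩
      exact k Γ' (M.le_refl _) (NND.ne (e.weaken h))
  | and A B ihA ihB =>
      refine fun Γ => ⟨fun s => NND.andI ((ihA Γ).1 s.1) ((ihB Γ).1 s.2), fun e => ?_⟩
      intro C Γ' h k
      have fA := (ihA Γ').2 (NND.andE1 (e.weaken h))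
      have fB := (ihB Γ').2 (NND.andE2 (e.weaken h))
      refine fA C Γ' (M.le_refl _) fun Γ2 h2 sA => ?_
      refine fB C Γ2 h2 fun Γ3 h3 sB => ?_
      exact k Γ3 (M.le_trans h2 h3) ⟨sforcesV_mono M A h3 sA, sB⟩
  | or A B ihA ihB =>
      refine fun Γ => ⟨fun s => s.elim (fun s => NND.orI1 ((ihA Γ).1 s))
        (fun s => NND.orI2 ((ihB Γ).1 s)), fun e => ?_⟩
      intro C Γ' h k
      refine NND.ne (NND.orE (e.weaken h) ?_ ?_)
      · exact (ihA (A :: Γ')).2 (NND.ax (List.mem_cons_self (a := A) (l := Γ'))) C (A :: Γ')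
          (M.le_refl _) fun Γ2 h2 sA =>
            k Γ2 (M.le_trans (cons_le A Γ') h2) (.inl sA)
      · exact (ihB (B :: Γ')).2 (NND.ax (List.mem_cons_self (a := B) (l := Γ'))) C (B :: Γ')
          (M.le_refl _) fun Γ2 h2 sB =>
            k Γ2 (M.le_trans (cons_le B Γ') h2) (.inr sB)
  | imp A B ihA ihB =>
      refine fun Γ => ⟨fun s => ?_, fun e => ?_⟩
      · refine NND.impI ?_
        have fA := (ihA (A :: Γ)).2 (NND.ax (List.mem_cons_self (a := A) (l := Γ)))
        refine fA B (A :: Γ) (M.le_refl _) fun Γ2 h2 sA => ?_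
        exact s Γ2 (M.le_trans (cons_le A Γ) h2) sA B Γ2 (M.le_refl _)
          fun Γ3 _ sB => (ihB Γ3).1 sB
      · refine fa_ret M (sforcesV_mono M (.imp A B)) ?_
        intro Γ' h1 sA
        exact (ihB Γ').2 (NND.impE (e.weaken h1) ((ihA Γ').1 sA))
  | all A ih =>
      refine fun Γ => ⟨fun s => ?_, fun e => ?_⟩
      · refine NND.allI fun t => ?_
        exact s Γ (M.le_refl _) t (Set.mem_univ t) (A t) Γ (M.le_refl _)
          fun Γ2 _ st => (ih t Γ2).1 st
      · refine fa_ret M (sforcesV_mono M (.all A)) ?_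
        intro Γ' h1 t _
        exact (ih t Γ').2 (NND.allE t (e.weaken h1))
  | ex A ih =>
      refine fun Γ => ⟨fun s => ?_, fun e => ?_⟩
      · obtain ⟨t, -, st⟩ := s
        exact NND.exI t ((ih t Γ).1 st)
      · intro C Γ' h k
        refine NND.ne (NND.exE (e.weaken h) fun t => ?_)
        exact (ih t (A t :: Γ')).2 (NND.ax (List.mem_cons_self (a := A t) (l := Γ'))) C
          (A t :: Γ') (M.le_refl _) fun Γ2 h2 st =>
            k Γ2 (M.le_trans (cons_le (A t) Γ') h2) ⟨t, Set.mem_univ t, st⟩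

end NbEAux

/-- normalisation by evaluation via call-by-value IK-CPS models,
for closed terms: every sequent derivable in the empty context has a
normal-form derivation. -/
theorem nbeV {Atm Trm : Type} (A : Fml Atm Trm)
    (d : Deriv ([] : List (Fml Atm Trm)) A) : NfD ([] : List (Fml Atm Trm)) A := by
  have f := NbEAux.soundV d [] (fun B hB => absurd hB (List.not_mem_nil (a := B)))
  exact f A [] ((univModel Atm Trm).le_refl _)
    (fun Γ' _ s => (NbEAux.completeV A Γ').1 s)
end

section
/- In any CK-CPS model, double-negation elimination holds for forcing: for every formula A and world w, if w forces ¬¬A (i.e., ((A ⇒ ⊥) ⇒ ⊥)), then w forces A, where ⊥ is interpreted via the exploding predicate. -/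
/-- First-order formulas of predicate logic, including `⊥`, with atoms from
`Atm` and quantification via functions from individual terms `Trm`. -/
inductive FmlB (Atm Trm : Type) : Type where
  | bot : FmlB Atm Trm
  | atom : Atm → FmlB Atm Trm
  | and : FmlB Atm Trm → FmlB Atm Trm → FmlB Atm Trm
  | or : FmlB Atm Trm → FmlB Atm Trm → FmlB Atm Trm
  | imp : FmlB Atm Trm → FmlB Atm Trm → FmlB Atm Trm
  | all : (Trm → FmlB Atm Trm) → FmlB Atm Trm
  | ex : (Trm → FmlB Atm Trm) → FmlB Atm Trm

/-- A Classical Kripke-CPS model, with a unary exploding predicate. -/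
structure CKCPS (Atm Trm : Type) where
  W : Type
  le : W → W → Prop
  le_refl : ∀ w, le w w
  le_trans : ∀ {a b c}, le a b → le b c → le a c
  /-- unary exploding predicate on worlds -/
  explode : W → Prop
  satom : W → Atm → Prop
  satom_mono : ∀ {w w' X}, le w w' → satom w X → satom w' X
  Dom : W → Set Trm
  Dom_mono : ∀ {w w'}, le w w' → Dom w ⊆ Dom w'

namespace CKCPS

variable {Atm Trm : Type}

/-- `w` refutes `A` (given strong forcing `S` of `A`): every `w' ≥ w` strongly
forcing `A` is exploding. -/
def refut (M : CKCPS Atm Trm) (S : M.W → Prop) (w : M.W) : Prop :=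
  ∀ w', M.le w w' → S w' → M.explode w'

/-- `w` forces `A` (given strong forcing `S` of `A`): every `w' ≥ w` refuting
`A` is exploding. -/
def fc (M : CKCPS Atm Trm) (S : M.W → Prop) (w : M.W) : Prop :=
  ∀ w', M.le w w' → M.refut S w' → M.explode w'

/-- Strong forcing in a CK-CPS model, with `w ⊩ₛ ⊥` given by the exploding
predicate. -/
def sforces (M : CKCPS Atm Trm) : FmlB Atm Trm → M.W → Prop
  | .bot => fun w => M.explode w
  | .atom X => fun w => M.satom w X
  | .and A B => fun w => M.fc (M.sforces A) w ∧ M.fc (M.sforces B) w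
  | .or A B => fun w => M.fc (M.sforces A) w ∨ M.fc (M.sforces B) w
  | .imp A B => fun w => ∀ w', M.le w w' → M.fc (M.sforces A) w' → M.fc (M.sforces B) w'
  | .all A => fun w => ∀ w', M.le w w' → ∀ t ∈ M.Dom w', M.fc (M.sforces (A t)) w'
  | .ex A => fun w => ∃ t ∈ M.Dom w, M.fc (M.sforces (A t)) w

/-- (Non-strong) forcing in a CK-CPS model. -/
def forces (M : CKCPS Atm Trm) (A : FmlB Atm Trm) (w : M.W) : Prop :=
  M.fc (M.sforces A) w

end CKCPS

/-- double-negation elimination holds for forcing in any CK-CPS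
model, `⊥` being interpreted via the exploding predicate. -/
theorem forces_dne {Atm Trm : Type} (M : CKCPS Atm Trm) (A : FmlB Atm Trm) (w : M.W)
    (h : M.forces (.imp (.imp A .bot) .bot) w) : M.forces A w := by
  intro w1 hw1 hr
  have hrA : ∀ u, M.le w1 u → M.refut (M.sforces A) u := by
    intro u hu u' hu' hs
    exact hr u' (M.le_trans hu hu') hs
  apply h w1 hw1
  -- refutation of ¬¬A at w1
  intro w2 hw2 hs2
  -- hs2 : sforces (imp (imp A bot) bot) w2
  have hfc : M.fc (M.sforces (.imp A .bot)) w2 := by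
    intro v hv hrv
    apply hrv v (M.le_refl v)
    -- sforces (imp A bot) v
    intro u hu hfcA
    -- fc bot u
    intro v' hv' _
    exact hfcA v' hv' (hrA v' (M.le_trans hw2 (M.le_trans hv (M.le_trans hu hv'))))
  have := hs2 w2 (M.le_refl w2) hfc
  exact this w2 (M.le_refl w2) (fun u _ he => he)
end
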